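/- arXiv:2306.00896 — 2 statements merged into one kernel-verified Lean document; each statement's English description precedes it below -/
import Mathlib

section
/- For every real n > 0 and every s ∈ ℝ, one has (n+2) f_{n+2}(s) + s > 0 and the recursion f_n(s) = 1 / ((n+2) f_{n+2}(s) + s) holds. -/
open MeasureTheory

/-- `I k s = ∫₀^∞ x^k e^{-x⁴/4 - s x²/2} dx`. -/
noncomputable def I (k s : ℝ) : ℝ :=
  ∫ x in Set.Ioi (0 : ℝ), x ^ k * Real.exp (-x ^ 4 / 4 - s * x ^ 2 / 2)

/-- The universal profile `f n s = I (n+1) s / (n · I (n-1) s)`. -/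
noncomputable def f (n s : ℝ) : ℝ := I (n + 1) s / (n * I (n - 1) s)

lemma exp_arg_le (s x : ℝ) : -x ^ 4 / 4 - s * x ^ 2 / 2 ≤ s ^ 2 / 2 - (1/8) * x ^ 4 := by
  nlinarith [sq_nonneg (x ^ 2 + 2 * s)]

lemma continuousOn_integrand (k s : ℝ) :
    ContinuousOn (fun x : ℝ => x ^ k * Real.exp (-x ^ 4 / 4 - s * x ^ 2 / 2))
      (Set.Ioi (0 : ℝ)) := by
  apply ContinuousOn.mul
  · exact ContinuousOn.rpow_const continuousOn_id (fun x hx => Or.inl (ne_of_gt hx))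
  · exact Continuous.continuousOn (by continuity)

lemma integrableOn_integrand (k s : ℝ) (hk : -1 < k) :
    IntegrableOn (fun x : ℝ => x ^ k * Real.exp (-x ^ 4 / 4 - s * x ^ 2 / 2))
      (Set.Ioi (0 : ℝ)) := by
  have hbase : IntegrableOn (fun x : ℝ => x ^ k * Real.exp (-(1/8) * x ^ (4:ℝ)))
      (Set.Ioi (0 : ℝ)) :=
    integrableOn_rpow_mul_exp_neg_mul_rpow hk (by norm_num) (by norm_num)
  have hg : IntegrableOn
      (fun x : ℝ => Real.exp (s ^ 2 / 2) * (x ^ k * Real.exp (-(1/8) * x ^ (4:ℝ))))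
      (Set.Ioi (0 : ℝ)) := hbase.const_mul _
  refine Integrable.mono' hg
    ((continuousOn_integrand k s).aestronglyMeasurable measurableSet_Ioi) ?_
  filter_upwards [ae_restrict_mem measurableSet_Ioi] with x hx
  have hx0 : (0:ℝ) < x := hx
  have h1 : (0:ℝ) ≤ x ^ k := Real.rpow_nonneg hx0.le k
  rw [Real.norm_eq_abs, abs_of_nonneg (mul_nonneg h1 (Real.exp_pos _).le)]
  have h4 : x ^ (4:ℝ) = x ^ (4:ℕ) := by
    rw [← Real.rpow_natCast x 4]; norm_num
  rw [h4, mul_comm (Real.exp (s ^ 2 / 2)), mul_assoc, ← Real.exp_add]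
  apply mul_le_mul_of_nonneg_left _ h1
  apply Real.exp_le_exp.2
  have := exp_arg_le s x
  linarith

lemma I_pos (k s : ℝ) (hk : -1 < k) : 0 < I k s := by
  have h1 : 0 ≤ᶠ[ae (volume.restrict (Set.Ioi (0:ℝ)))]
      fun x : ℝ => x ^ k * Real.exp (-x ^ 4 / 4 - s * x ^ 2 / 2) := by
    filter_upwards [ae_restrict_mem measurableSet_Ioi] with x hx
    exact mul_nonneg (Real.rpow_nonneg (le_of_lt hx) k) (Real.exp_pos _).le
  have h2 := integrableOn_integrand k s hk
  rw [I, setIntegral_pos_iff_support_of_nonneg_ae h1 h2]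
  have hsub : Set.Ioi (0:ℝ) ⊆
      Function.support (fun x : ℝ => x ^ k * Real.exp (-x ^ 4 / 4 - s * x ^ 2 / 2)) ∩
        Set.Ioi 0 := by
    intro x hx
    refine ⟨?_, hx⟩
    have : 0 < x ^ k * Real.exp (-x ^ 4 / 4 - s * x ^ 2 / 2) :=
      mul_pos (Real.rpow_pos_of_pos hx k) (Real.exp_pos _)
    exact Function.mem_support.2 this.ne'
  refine lt_of_lt_of_le ?_ (measure_mono hsub)
  simp [Real.volume_Ioi]

lemma tendsto_F (n s : ℝ) (hn : 0 < n) :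
    Filter.Tendsto (fun x : ℝ => x ^ n * Real.exp (-x ^ 4 / 4 - s * x ^ 2 / 2))
      Filter.atTop (nhds 0) := by
  have hg : Filter.Tendsto
      (fun x : ℝ => Real.exp (s ^ 2 / 2) * ((x ^ (4:ℕ) : ℝ) ^ (n/4) *
        Real.exp (-(1/8) * x ^ (4:ℕ)))) Filter.atTop (nhds 0) := by
    have h1 := tendsto_rpow_mul_exp_neg_mul_atTop_nhds_zero (n/4) (1/8) (by norm_num)
    have h2 : Filter.Tendsto (fun x : ℝ => x ^ (4:ℕ)) Filter.atTop Filter.atTop :=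
      Filter.tendsto_pow_atTop (by norm_num)
    have := (h1.comp h2).const_mul (Real.exp (s ^ 2 / 2))
    simpa using this
  apply squeeze_zero_norm' _ hg
  filter_upwards [Filter.eventually_ge_atTop (1:ℝ)] with x hx
  have hx0 : (0:ℝ) < x := lt_of_lt_of_le one_pos hx
  have h1 : (0:ℝ) ≤ x ^ n := Real.rpow_nonneg hx0.le n
  rw [Real.norm_eq_abs, abs_of_nonneg (mul_nonneg h1 (Real.exp_pos _).le)]
  have heq : ((x ^ (4:ℕ) : ℝ)) ^ (n/4) = x ^ n := by
    rw [← Real.rpow_natCast x 4, ← Real.rpow_mul hx0.le]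
    norm_num
    congr 1
    ring
  rw [heq, mul_comm (Real.exp (s ^ 2 / 2)), mul_assoc, ← Real.exp_add]
  apply mul_le_mul_of_nonneg_left _ h1
  apply Real.exp_le_exp.2
  have := exp_arg_le s x
  linarith

lemma ibp (n s : ℝ) (hn : 0 < n) : n * I (n - 1) s = I (n + 3) s + s * I (n + 1) s := by
  have key : ∫ x in Set.Ioi (0:ℝ),
      (n * (x ^ (n-1) * Real.exp (-x ^ 4 / 4 - s * x ^ 2 / 2))
        - x ^ (n+3) * Real.exp (-x ^ 4 / 4 - s * x ^ 2 / 2)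
        - s * (x ^ (n+1) * Real.exp (-x ^ 4 / 4 - s * x ^ 2 / 2))) = 0 := by
    have hderiv : ∀ x ∈ Set.Ioi (0:ℝ),
        HasDerivAt (fun x : ℝ => x ^ n * Real.exp (-x ^ 4 / 4 - s * x ^ 2 / 2))
          (n * (x ^ (n-1) * Real.exp (-x ^ 4 / 4 - s * x ^ 2 / 2))
            - x ^ (n+3) * Real.exp (-x ^ 4 / 4 - s * x ^ 2 / 2)
            - s * (x ^ (n+1) * Real.exp (-x ^ 4 / 4 - s * x ^ 2 / 2))) x := by
      intro x hx
      have hx0 : (0:ℝ) < x := hx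
      have h1 : HasDerivAt (fun x : ℝ => x ^ n) (n * x ^ (n-1)) x :=
        Real.hasDerivAt_rpow_const (Or.inl hx0.ne')
      have h2 := (((hasDerivAt_pow 4 x).neg.div_const 4).sub
        (((hasDerivAt_pow 2 x).const_mul s).div_const 2))
      have h3 := h2.exp
      have h4 := h1.mul h3
      convert h4 using 1
      · rfl
      · rfl
      · rfl
      have e1 : x ^ (n+3) = x ^ n * x ^ (3:ℕ) := by
        rw [Real.rpow_add hx0, show ((3:ℝ)) = ((3:ℕ):ℝ) by norm_num, Real.rpow_natCast]
      have e2 : x ^ (n+1) = x ^ n * x := by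
        rw [Real.rpow_add hx0, Real.rpow_one]
      rw [e1, e2]
      simp only [Pi.sub_apply, Pi.neg_apply]
      push_cast
      ring
    have hint : IntegrableOn
        (fun x : ℝ => n * (x ^ (n-1) * Real.exp (-x ^ 4 / 4 - s * x ^ 2 / 2))
          - x ^ (n+3) * Real.exp (-x ^ 4 / 4 - s * x ^ 2 / 2)
          - s * (x ^ (n+1) * Real.exp (-x ^ 4 / 4 - s * x ^ 2 / 2)))
        (Set.Ioi (0:ℝ)) := by
      exact (((integrableOn_integrand (n-1) s (by linarith)).const_mul n).sub
        (integrableOn_integrand (n+3) s (by linarith))).sub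
        ((integrableOn_integrand (n+1) s (by linarith)).const_mul s)
    have hcont : ContinuousWithinAt
        (fun x : ℝ => x ^ n * Real.exp (-x ^ 4 / 4 - s * x ^ 2 / 2)) (Set.Ici 0) 0 := by
      apply ContinuousWithinAt.mul
      · exact (continuousWithinAt_id.rpow_const (Or.inr hn.le))
      · exact (Continuous.continuousWithinAt (by continuity))
    have htend := tendsto_F n s hn
    have := integral_Ioi_of_hasDerivAt_of_tendsto hcont hderiv hint htend
    rw [this]
    simp [Real.zero_rpow hn.ne']
  have split : ∫ x in Set.Ioi (0:ℝ),
      (n * (x ^ (n-1) * Real.exp (-x ^ 4 / 4 - s * x ^ 2 / 2))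
        - x ^ (n+3) * Real.exp (-x ^ 4 / 4 - s * x ^ 2 / 2)
        - s * (x ^ (n+1) * Real.exp (-x ^ 4 / 4 - s * x ^ 2 / 2)))
      = n * I (n-1) s - I (n+3) s - s * I (n+1) s := by
    rw [integral_sub, integral_sub, integral_const_mul, integral_const_mul]
    · rfl
    · exact (integrableOn_integrand (n-1) s (by linarith)).const_mul n
    · exact integrableOn_integrand (n+3) s (by linarith)
    · exact (((integrableOn_integrand (n-1) s (by linarith)).const_mul n).sub
        (integrableOn_integrand (n+3) s (by linarith)))
    · exact (integrableOn_integrand (n+1) s (by linarith)).const_mul s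
  rw [split] at key
  linarith

/-- The recursion `f_n(s) = 1 / ((n+2) f_{n+2}(s) + s)`, with positive denominator. -/
theorem universal_profile_recursion (n : ℝ) (hn : 0 < n) (s : ℝ) :
    0 < (n + 2) * f (n + 2) s + s ∧ f n s = 1 / ((n + 2) * f (n + 2) s + s) := by
  have hA : 0 < I (n+1) s := I_pos _ s (by linarith)
  have hB : 0 < I (n-1) s := I_pos _ s (by linarith)
  have hC : 0 < I (n+3) s := I_pos _ s (by linarith)
  have hibp := ibp n s hn
  have hf2 : (n + 2) * f (n + 2) s = I (n+3) s / I (n+1) s := by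
    rw [f]
    have e1 : n + 2 + 1 = n + 3 := by ring
    have e2 : n + 2 - 1 = n + 1 := by ring
    rw [e1, e2]
    field_simp
  have hden : (n + 2) * f (n + 2) s + s = n * I (n-1) s / I (n+1) s := by
    rw [hf2, hibp]; field_simp
  have hpos : 0 < n * I (n-1) s / I (n+1) s := div_pos (mul_pos hn hB) hA
  refine ⟨by rw [hden]; exact hpos, ?_⟩
  rw [hden, f, eq_div_iff hpos.ne', div_mul_div_comm,
    mul_comm (I (n + 1) s) (n * I (n - 1) s)]
  exact div_self (mul_pos (mul_pos hn hB) hA).ne'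
end

section
/- For all reals n > 0 and k > 0: (i) lim_{s→+∞} (s/2)^{k/2} · Σ_{n,k}(s) = Γ((n+k)/2) / Γ(n/2), and (ii) lim_{s→−∞} |s|^{−k/2} · Σ_{n,k}(s) = 1. -/
open MeasureTheory

/-- The moment `Σ_{n,k}(s) = I_{k+n-1}(s) / I_{n-1}(s)`. -/
noncomputable def Sig (n k s : ℝ) : ℝ := I (k + n - 1) s / I (n - 1) s

section SigmaAsymptoticsAux

open Set Real Filter
open scoped ENNReal Topology

noncomputable def J (c s : ℝ) : ℝ := ∫ y in Ioi (0:ℝ), y ^ c * Real.exp (-y ^ 2 - s * y)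

lemma measurable_Jint (c s : ℝ) :
    Measurable (fun y : ℝ => y ^ c * Real.exp (-y ^ 2 - s * y)) := by fun_prop

lemma integrableOn_J (c s : ℝ) (hc : -1 < c) :
    IntegrableOn (fun y : ℝ => y ^ c * Real.exp (-y ^ 2 - s * y)) (Ioi 0) := by
  have hg : IntegrableOn (fun y : ℝ => Real.exp (s^2/2) * (y ^ c * Real.exp (-(1/2) * y ^ 2)))
      (Ioi 0) := (integrableOn_rpow_mul_exp_neg_mul_sq (by norm_num) hc).const_mul _
  refine hg.mono' (measurable_Jint c s).aestronglyMeasurable ?_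
  filter_upwards [ae_restrict_mem measurableSet_Ioi] with y hy
  have hy0 : (0:ℝ) < y := hy
  rw [Real.norm_eq_abs, abs_mul, abs_of_nonneg (rpow_nonneg hy0.le c),
    abs_of_nonneg (Real.exp_pos _).le]
  rw [mul_comm (Real.exp (s^2/2)) _, mul_assoc]
  refine mul_le_mul_of_nonneg_left ?_ (rpow_nonneg hy0.le c)
  rw [← Real.exp_add]
  apply Real.exp_le_exp.mpr
  nlinarith [sq_nonneg (y + s)]

lemma I_eq (k s : ℝ) : I k s = 2 ^ ((k - 1)/2) * J ((k - 1)/2) s := by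
  have h2 : (0:ℝ) < 2 := by norm_num
  set g : ℝ → ℝ := fun y => (1/2) * (y ^ ((k-1)/2) * Real.exp (-y ^ 2/4 - s * y / 2)) with hg
  have sub1 : (∫ x in Ioi (0:ℝ), ((2:ℝ) * x ^ ((2:ℝ) - 1)) • g (x ^ (2:ℝ)))
      = ∫ y in Ioi (0:ℝ), g y := integral_comp_rpow_Ioi_of_pos h2
  have e1 : I k s = ∫ y in Ioi (0:ℝ), g y := by
    rw [← sub1, I]
    refine setIntegral_congr_fun measurableSet_Ioi fun x hx => ?_
    have hx0 : (0:ℝ) < x := hx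
    have hk1 : (x ^ (2:ℝ)) ^ ((k-1)/2) = x ^ (k-1) := by
      rw [← Real.rpow_mul hx0.le, show (2:ℝ)*((k-1)/2) = k-1 by ring]
    have h2R : x ^ (2:ℝ) = x ^ (2:ℕ) := by
      rw [show (2:ℝ) = ((2:ℕ):ℝ) by norm_num, Real.rpow_natCast]
    have hxk : x * x ^ (k-1) = x ^ k := by
      nth_rewrite 1 [← Real.rpow_one x]
      rw [← Real.rpow_add hx0]; ring_nf
    rw [smul_eq_mul, hg]
    simp only []
    rw [hk1, h2R, show (2:ℝ) - 1 = 1 by norm_num, Real.rpow_one,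
      show ((x^(2:ℕ))^(2:ℕ) : ℝ) = x^(4:ℕ) by ring, ← hxk]
    ring
  have sub2 : (∫ z in Ioi (0:ℝ), g (2 * z)) = (2:ℝ)⁻¹ • ∫ y in Ioi ((2:ℝ) * 0), g y :=
    integral_comp_mul_left_Ioi g 0 h2
  rw [e1]
  have e3 : ∫ y in Ioi (0:ℝ), g y = 2 * ∫ z in Ioi (0:ℝ), g (2 * z) := by
    rw [sub2]; simp
  rw [e3]
  have e2 : ∀ z ∈ Ioi (0:ℝ), g (2 * z)
      = (1/2) * 2 ^ ((k-1)/2) * (z ^ ((k-1)/2) * Real.exp (-z ^ 2 - s * z)) := by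
    intro z hz
    have hz0 : (0:ℝ) < z := hz
    rw [hg]
    simp only []
    rw [Real.mul_rpow (by norm_num : (0:ℝ) ≤ 2) hz0.le,
      show -((2:ℝ)*z) ^ 2/4 - s * (2*z)/2 = -z ^ 2 - s * z by ring]
    ring
  rw [setIntegral_congr_fun measurableSet_Ioi e2, integral_const_mul, J]
  ring

lemma Sig_eq (n k s : ℝ) :
    Sig n k s = 2 ^ (k/2) * (J ((n+k)/2 - 1) s / J (n/2 - 1) s) := by
  rw [Sig, I_eq, I_eq, show (k + n - 1 - 1)/2 = (n+k)/2 - 1 by ring,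
    show (n - 1 - 1)/2 = n/2 - 1 by ring]
  rw [mul_div_mul_comm, ← Real.rpow_sub (by norm_num : (0:ℝ) < 2),
    show ((n+k)/2 - 1 - (n/2 - 1)) = k/2 by ring]

noncomputable def Kf (c s : ℝ) : ℝ := ∫ t in Ioi (0:ℝ), t ^ c * Real.exp (-(t/s)^2 - t)

lemma J_scaling (c s : ℝ) (hs : 0 < s) : J c s = s ^ (-(c+1)) * Kf c s := by
  have hsne : s ≠ 0 := hs.ne'
  set g : ℝ → ℝ := fun y => y ^ c * Real.exp (-y ^ 2 - s * y) with hg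
  have sub : (∫ t in Ioi (0:ℝ), g (s⁻¹ * t)) = (s⁻¹)⁻¹ • ∫ y in Ioi (s⁻¹ * 0), g y :=
    integral_comp_mul_left_Ioi g 0 (inv_pos.mpr hs)
  have e0 : J c s = s⁻¹ * ∫ t in Ioi (0:ℝ), g (s⁻¹ * t) := by
    rw [sub, inv_inv, smul_eq_mul, ← mul_assoc, inv_mul_cancel₀ hsne, one_mul, mul_zero, J]
  have e1 : ∀ t ∈ Ioi (0:ℝ), g (s⁻¹ * t) = (s ^ c)⁻¹ * (t ^ c * Real.exp (-(t/s)^2 - t)) := by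
    intro t ht
    have ht0 : (0:ℝ) < t := ht
    rw [hg]
    simp only []
    rw [show s⁻¹ * t = t / s by ring, Real.div_rpow ht0.le hs.le,
      show -(t/s)^2 - s * (t/s) = -(t/s)^2 - t by field_simp]
    ring
  rw [e0, setIntegral_congr_fun measurableSet_Ioi e1, integral_const_mul, Kf]
  rw [← mul_assoc]
  congr 1
  rw [← Real.rpow_neg_one s, ← Real.rpow_neg hs.le, ← Real.rpow_add hs]
  congr 1; ring

lemma tendsto_Kf (c : ℝ) (hc : -1 < c) : Tendsto (Kf c) atTop (𝓝 (Real.Gamma (c+1))) := by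
  have hc1 : (0:ℝ) < c + 1 := by linarith
  have hGamma : Real.Gamma (c+1) = ∫ t in Ioi (0:ℝ), t ^ c * Real.exp (-t) := by
    rw [Real.Gamma_eq_integral hc1]
    refine setIntegral_congr_fun measurableSet_Ioi fun t ht => ?_
    rw [show c + 1 - 1 = c by ring, mul_comm]
  rw [hGamma]
  refine tendsto_integral_filter_of_dominated_convergence
    (fun t => t ^ c * Real.exp (-t)) ?_ ?_ ?_ ?_
  · refine Eventually.of_forall fun s => ?_
    apply Measurable.aestronglyMeasurable
    fun_prop
  · refine Eventually.of_forall fun s => ?_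
    filter_upwards [ae_restrict_mem measurableSet_Ioi] with t ht
    have ht0 : (0:ℝ) < t := ht
    rw [Real.norm_eq_abs, abs_mul, abs_of_nonneg (rpow_nonneg ht0.le c),
      abs_of_nonneg (Real.exp_pos _).le]
    refine mul_le_mul_of_nonneg_left ?_ (rpow_nonneg ht0.le c)
    apply Real.exp_le_exp.mpr
    nlinarith [sq_nonneg (t/s)]
  · rw [← IntegrableOn]
    simpa [mul_comm, show c + 1 - 1 = c by ring]
      using Real.GammaIntegral_convergent hc1
  · filter_upwards [ae_restrict_mem measurableSet_Ioi] with t ht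
    have h1 : Tendsto (fun s : ℝ => t / s) atTop (𝓝 0) :=
      tendsto_const_nhds.div_atTop tendsto_id
    have h2 : Tendsto (fun s : ℝ => -(t/s)^2 - t) atTop (𝓝 (-(0:ℝ)^2 - t)) :=
      (((h1.pow 2).neg).sub tendsto_const_nhds)
    have h3 := (Real.continuous_exp.tendsto _).comp h2
    have h4 := h3.const_mul (t ^ c)
    simpa using h4

noncomputable def phi (c σ : ℝ) : ℝ → ℝ :=
  fun u => ((u + σ/2) * (2/σ)) ^ c * Real.exp (-u^2)

lemma measurable_phi (c σ : ℝ) : Measurable (phi c σ) := by unfold phi; fun_prop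

noncomputable def Ff (c σ : ℝ) : ℝ := ∫ u in Ioi (-(σ/2)), phi c σ u

lemma shift_integral (g : ℝ → ℝ) (a : ℝ) :
    ∫ u in Ioi (-a), g (u + a) = ∫ y in Ioi (0:ℝ), g y := by
  have := (measurePreserving_add_right (volume : Measure ℝ) a).setIntegral_preimage_emb
    (MeasurableEquiv.addRight a).measurableEmbedding g (Ioi 0)
  simpa using this

lemma integrableOn_phi (c σ : ℝ) (hc : -1 < c) (hσ : 0 < σ) :
    IntegrableOn (phi c σ) (Ioi (-(σ/2))) := by
  have hσne : σ ≠ 0 := hσ.ne'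
  -- the shifted function
  set h : ℝ → ℝ := fun y => (y * (2/σ)) ^ c * Real.exp (-(y - σ/2)^2) with hh
  have hint : IntegrableOn h (Ioi 0) := by
    have base := ((integrableOn_J c (-σ) hc).const_mul ((2/σ) ^ c * Real.exp (-(σ^2/4))))
    refine IntegrableOn.congr_fun base ?_ measurableSet_Ioi
    intro y hy
    have hy0 : (0:ℝ) < y := hy
    rw [hh]
    simp only []
    rw [Real.mul_rpow hy0.le (by positivity),
      show -(y - σ/2)^2 = -(σ^2/4) + (-y^2 - (-σ) * y) by ring, Real.exp_add]
    ring
  have key : IntegrableOn (fun u : ℝ => h (u + σ/2)) (Ioi (-(σ/2))) := by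
    have hpre : (fun x : ℝ => x + σ/2) ⁻¹' (Ioi 0) = Ioi (-(σ/2)) := by
      ext x; simp only [mem_preimage, mem_Ioi]; constructor <;> intro h <;> linarith
    have := ((measurePreserving_add_right (volume : Measure ℝ) (σ/2)).integrableOn_comp_preimage
      (MeasurableEquiv.addRight (σ/2)).measurableEmbedding (s := Ioi 0)).mpr hint
    rwa [hpre] at this
  refine IntegrableOn.congr_fun key ?_ measurableSet_Ioi
  intro u _
  rw [hh]
  simp only [phi]
  rw [add_sub_cancel_right]

lemma J_shift (c σ : ℝ) (hσ : 0 < σ) :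
    J c (-σ) = Real.exp (σ^2/4) * ((σ/2) ^ c * Ff c σ) := by
  have hσne : σ ≠ 0 := hσ.ne'
  set G : ℝ → ℝ := fun y => (y * (2/σ)) ^ c * Real.exp (-(y - σ/2)^2) with hG
  have e1 : Ff c σ = ∫ y in Ioi (0:ℝ), G y := by
    rw [Ff, ← shift_integral G (σ/2)]
    refine setIntegral_congr_fun measurableSet_Ioi fun u _ => ?_
    rw [hG]; simp only [phi]; rw [add_sub_cancel_right]
  rw [e1, J, ← integral_const_mul, ← integral_const_mul]
  refine setIntegral_congr_fun measurableSet_Ioi fun y hy => ?_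
  have hy0 : (0:ℝ) < y := hy
  rw [hG]
  simp only []
  rw [Real.mul_rpow hy0.le (by positivity)]
  have h2 : (σ/2) ^ c * (y ^ c * (2/σ) ^ c) = y ^ c * ((σ/2) ^ c * (2/σ) ^ c) := by ring
  have h3 : (σ/2 : ℝ) ^ c * (2/σ) ^ c = 1 := by
    rw [← Real.mul_rpow (by positivity) (by positivity), show (σ/2) * (2/σ) = 1 by field_simp,
      Real.one_rpow]
  have h4 : Real.exp (σ^2/4) * Real.exp (-(y - σ/2)^2) = Real.exp (-y^2 - (-σ)*y) := by
    rw [← Real.exp_add]; congr 1; ring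
  rw [← h4]
  linear_combination (-(Real.exp (σ^2/4) * Real.exp (-(y - σ/2)^2) * y ^ c)) * h3

lemma tendsto_Gf (c : ℝ) (hc : -1 < c) :
    Tendsto (fun σ => ∫ u in Ioi (-(σ/4)), phi c σ u) atTop (𝓝 (Real.sqrt π)) := by
  have hlimint : ∫ u : ℝ, Real.exp (-u^2) = Real.sqrt π := by
    simpa using integral_gaussian 1
  rw [← hlimint]
  have main : Tendsto (fun σ => ∫ u, (Ioi (-(σ/4))).indicator (phi c σ) u) atTop
      (𝓝 (∫ u : ℝ, Real.exp (-u^2))) := by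
    refine tendsto_integral_filter_of_dominated_convergence
      (fun u => 2 ^ |c| * Real.exp (2*c^2) * Real.exp (-(1/2) * u^2)) ?_ ?_ ?_ ?_
    · exact Eventually.of_forall fun σ =>
        ((measurable_phi c σ).indicator measurableSet_Ioi).aestronglyMeasurable
    · filter_upwards [eventually_ge_atTop (1:ℝ)] with σ hσ1
      have hσ0 : (0:ℝ) < σ := lt_of_lt_of_le one_pos hσ1
      refine Eventually.of_forall fun u => ?_
      by_cases hu : u ∈ Ioi (-(σ/4))
      · rw [indicator_of_mem hu]
        have hu4 : -(σ/4) < u := hu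
        have ht0 : (0:ℝ) < (u + σ/2) * (2/σ) := by
          apply mul_pos (by linarith) (by positivity)
        rw [phi, Real.norm_eq_abs, abs_mul, abs_of_nonneg (rpow_nonneg ht0.le c),
          abs_of_nonneg (Real.exp_pos _).le]
        have htform : (u + σ/2) * (2/σ) = (2*u + σ)/σ := by field_simp
        have claim1 : ((u + σ/2) * (2/σ)) ^ c ≤ 2 ^ |c| * Real.exp (2 * |c| * |u|) := by
          rcases le_or_gt 0 c with hc0 | hc0
          · rw [abs_of_nonneg hc0]
            have hle : (u + σ/2) * (2/σ) ≤ 1 + 2*|u| := by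
              rw [htform, div_le_iff₀ hσ0]
              have h1 := le_abs_self u
              have h2 := abs_nonneg u
              nlinarith
            calc ((u + σ/2) * (2/σ)) ^ c ≤ (1 + 2*|u|) ^ c :=
                  Real.rpow_le_rpow ht0.le hle hc0
              _ ≤ (Real.exp (2*|u|)) ^ c := by
                  refine Real.rpow_le_rpow (by positivity) ?_ hc0
                  linarith [Real.add_one_le_exp (2*|u|)]
              _ = Real.exp (2 * |u| * c) := by rw [← Real.exp_mul]
              _ ≤ 2 ^ c * Real.exp (2 * c * |u|) := by
                  rw [show 2 * |u| * c = 2 * c * |u| by ring]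
                  exact le_mul_of_one_le_left (Real.exp_pos _).le
                    (Real.one_le_rpow one_le_two hc0)
          · rw [abs_of_neg hc0]
            have ht2 : (1:ℝ)/2 ≤ (u + σ/2) * (2/σ) := by
              rw [htform, le_div_iff₀ hσ0]
              linarith
            calc ((u + σ/2) * (2/σ)) ^ c ≤ (1/2:ℝ) ^ c :=
                  Real.rpow_le_rpow_of_nonpos one_half_pos ht2 hc0.le
              _ = 2 ^ (-c) := by
                  rw [show (1/2:ℝ) = 2⁻¹ by norm_num,
                    Real.inv_rpow (by norm_num), ← Real.rpow_neg (by norm_num)]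
              _ ≤ 2 ^ (-c) * Real.exp (2 * (-c) * |u|) := by
                  refine le_mul_of_one_le_right (by positivity) ?_
                  have h0 : (0:ℝ) ≤ 2 * (-c) * |u| := by
                    have := abs_nonneg u
                    nlinarith
                  nlinarith [Real.add_one_le_exp (2 * (-c) * |u|)]
        have claim2 : Real.exp (2 * |c| * |u|) * Real.exp (-u^2)
            ≤ Real.exp (2*c^2) * Real.exp (-(1/2) * u^2) := by
          rw [← Real.exp_add, ← Real.exp_add]
          apply Real.exp_le_exp.mpr
          nlinarith [sq_nonneg (|u| - 2*|c|), sq_abs u, sq_abs c]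
        calc ((u + σ/2) * (2/σ)) ^ c * Real.exp (-u^2)
            ≤ (2 ^ |c| * Real.exp (2 * |c| * |u|)) * Real.exp (-u^2) :=
              mul_le_mul_of_nonneg_right claim1 (Real.exp_pos _).le
          _ = 2 ^ |c| * (Real.exp (2 * |c| * |u|) * Real.exp (-u^2)) := by ring
          _ ≤ 2 ^ |c| * (Real.exp (2*c^2) * Real.exp (-(1/2) * u^2)) :=
              mul_le_mul_of_nonneg_left claim2 (by positivity)
          _ = 2 ^ |c| * Real.exp (2*c^2) * Real.exp (-(1/2) * u^2) := by ring
      · rw [indicator_of_notMem hu]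
        simp only [norm_zero]
        positivity
    · exact (integrable_exp_neg_mul_sq one_half_pos).const_mul (2 ^ |c| * Real.exp (2*c^2))
    · refine Eventually.of_forall fun u => ?_
      have h1 : Tendsto (fun σ:ℝ => 2*u/σ + 1) atTop (𝓝 1) := by
        have := (tendsto_const_nhds (x := 2*u) (f := atTop)).div_atTop (tendsto_id (α := ℝ))
        simpa using this.add (tendsto_const_nhds (x := (1:ℝ)))
      have h2 : Tendsto (fun σ => (2*u/σ + 1) ^ c * Real.exp (-u^2)) atTop
          (𝓝 (Real.exp (-u^2))) := by
        have := (h1.rpow_const (p := c) (Or.inl one_ne_zero)).mul_const (Real.exp (-u^2))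
        simpa using this
      refine h2.congr' ?_
      filter_upwards [eventually_gt_atTop (4*|u|), eventually_gt_atTop (0:ℝ)] with σ h4u hσ0
      have hmem : u ∈ Ioi (-(σ/4)) := by
        simp only [mem_Ioi]
        have := neg_abs_le u
        linarith
      rw [indicator_of_mem hmem, phi]
      congr 2
      field_simp
  exact main.congr fun σ => integral_indicator measurableSet_Ioi

lemma tail_integrable (c σ : ℝ) (hc : -1 < c) (hσ : 0 < σ) :
    IntegrableOn (fun u : ℝ => ((u + σ/2) * (2/σ)) ^ c) (Ioc (-(σ/2)) (-(σ/4))) := by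
  have hσne : σ ≠ 0 := hσ.ne'
  have base : IntervalIntegrable (fun x : ℝ => x ^ c) volume 0 (1/2) :=
    intervalIntegral.intervalIntegrable_rpow' hc
  have i1 := base.comp_add_right 1
  have i2 := i1.comp_mul_left (c := 2/σ)
  have e1 : ((0:ℝ) - 1)/(2/σ) = -(σ/2) := by field_simp; ring
  have e2 : ((1:ℝ)/2 - 1)/(2/σ) = -(σ/4) := by field_simp; ring
  rw [e1, e2] at i2
  have i3 := (intervalIntegrable_iff_integrableOn_Ioc_of_le (by linarith)).mp i2
  refine IntegrableOn.congr_fun i3 (fun u _ => ?_) measurableSet_Ioc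
  congr 1
  field_simp

lemma tail_value (c σ : ℝ) (hc : -1 < c) (hσ : 0 < σ) :
    ∫ u in Ioc (-(σ/2)) (-(σ/4)), ((u + σ/2) * (2/σ)) ^ c
      = (σ/2) * ((1/2:ℝ) ^ (c+1)/(c+1)) := by
  have hσne : σ ≠ 0 := hσ.ne'
  have hc1 : (0:ℝ) < c + 1 := by linarith
  rw [← intervalIntegral.integral_of_le (by linarith : -(σ/2) ≤ -(σ/4))]
  have e0 : ∀ u, ((u + σ/2) * (2/σ)) ^ c = ((2/σ) * u + 1) ^ c := by
    intro u; congr 1; field_simp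
  simp_rw [e0]
  rw [intervalIntegral.integral_comp_mul_add (fun x : ℝ => x ^ c) (by positivity : (2/σ) ≠ 0) 1]
  have e1 : (2/σ) * (-(σ/2)) + 1 = 0 := by field_simp; ring
  have e2 : (2/σ) * (-(σ/4)) + 1 = 1/2 := by field_simp; ring
  rw [e1, e2, integral_rpow (Or.inl hc), Real.zero_rpow hc1.ne', sub_zero, smul_eq_mul, inv_div]

lemma tendsto_Tf (c : ℝ) (hc : -1 < c) :
    Tendsto (fun σ => ∫ u in Ioc (-(σ/2)) (-(σ/4)), phi c σ u) atTop (𝓝 0) := by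
  have hc1 : (0:ℝ) < c + 1 := by linarith
  -- the upper bound function
  set C : ℝ → ℝ := fun σ => Real.exp (-(σ^2/16)) * ((σ/2) * ((1/2:ℝ) ^ (c+1)/(c+1))) with hC
  have hCtendsto : Tendsto C atTop (𝓝 0) := by
    have hE : Tendsto (fun σ : ℝ => Real.exp (-(σ^2/16)) * σ) atTop (𝓝 0) := by
      refine squeeze_zero' ?_ ?_ Real.tendsto_exp_neg_atTop_nhds_zero
      · filter_upwards [eventually_ge_atTop (0:ℝ)] with σ hσ0
        positivity
      · filter_upwards [eventually_ge_atTop (32:ℝ)] with σ hσ32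
        have h1 : σ ≤ Real.exp σ := by nlinarith [Real.add_one_le_exp σ]
        calc Real.exp (-(σ^2/16)) * σ ≤ Real.exp (-(σ^2/16)) * Real.exp σ :=
              mul_le_mul_of_nonneg_left h1 (Real.exp_pos _).le
          _ = Real.exp (σ - σ^2/16) := by rw [← Real.exp_add]; ring_nf
          _ ≤ Real.exp (-σ) := Real.exp_le_exp.mpr (by nlinarith)
    have := hE.mul_const ((1/2) * ((1/2:ℝ) ^ (c+1)/(c+1)))
    rw [zero_mul] at this
    refine this.congr fun σ => ?_
    rw [hC]; ring
  refine squeeze_zero' ?_ ?_ hCtendsto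
  · filter_upwards [eventually_gt_atTop (0:ℝ)] with σ hσ0
    refine setIntegral_nonneg measurableSet_Ioc fun u hu => ?_
    have : (0:ℝ) ≤ (u + σ/2) * (2/σ) := mul_nonneg (by linarith [hu.1]) (by positivity)
    exact mul_nonneg (rpow_nonneg this c) (Real.exp_pos _).le
  · filter_upwards [eventually_gt_atTop (0:ℝ)] with σ hσ0
    have step1 : ∫ u in Ioc (-(σ/2)) (-(σ/4)), phi c σ u
        ≤ ∫ u in Ioc (-(σ/2)) (-(σ/4)),
            Real.exp (-(σ^2/16)) * ((u + σ/2) * (2/σ)) ^ c := by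
      refine setIntegral_mono_on ?_ ?_ measurableSet_Ioc ?_
      · exact (integrableOn_phi c σ hc hσ0).mono_set fun u hu => hu.1
      · exact (tail_integrable c σ hc hσ0).const_mul _
      · intro u hu
        rw [phi, mul_comm (Real.exp (-(σ^2/16)))]
        refine mul_le_mul_of_nonneg_left ?_
          (rpow_nonneg (mul_nonneg (by linarith [hu.1]) (by positivity)) c)
        apply Real.exp_le_exp.mpr
        have hu2 := hu.2
        nlinarith
    calc ∫ u in Ioc (-(σ/2)) (-(σ/4)), phi c σ u
        ≤ _ := step1
      _ = C σ := by
          rw [integral_const_mul, tail_value c σ hc hσ0, hC]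

lemma tendsto_Ff_aux (c : ℝ) (hc : -1 < c)
    (hG : Tendsto (fun σ => ∫ u in Ioi (-(σ/4)), phi c σ u) atTop (𝓝 (Real.sqrt π))) :
    Tendsto (fun σ => ∫ u in Ioi (-(σ/2)), phi c σ u) atTop (𝓝 (Real.sqrt π)) := by
  have hsum := (tendsto_Tf c hc).add hG
  rw [zero_add] at hsum
  refine hsum.congr' ?_
  filter_upwards [eventually_gt_atTop (0:ℝ)] with σ hσ0
  rw [← setIntegral_union (Ioc_disjoint_Ioi le_rfl) measurableSet_Ioi
      ((integrableOn_phi c σ hc hσ0).mono_set fun u hu => hu.1)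
      ((integrableOn_phi c σ hc hσ0).mono_set (Ioi_subset_Ioi (by linarith))),
    Ioc_union_Ioi_eq_Ioi (by linarith : -(σ/2) ≤ -(σ/4))]

lemma tendsto_Ff (c : ℝ) (hc : -1 < c) : Tendsto (Ff c) atTop (𝓝 (Real.sqrt π)) :=
  tendsto_Ff_aux c hc (tendsto_Gf c hc)

theorem part1 (n k : ℝ) (hn : 0 < n) (hk : 0 < k) :
    Tendsto (fun s : ℝ => (s / 2) ^ (k / 2) * Sig n k s) atTop
      (𝓝 (Real.Gamma ((n + k) / 2) / Real.Gamma (n / 2))) := by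
  have hc1 : -1 < (n+k)/2 - 1 := by linarith
  have hc0 : -1 < n/2 - 1 := by linarith
  have hratio := (tendsto_Kf _ hc1).div (tendsto_Kf _ hc0)
    (Real.Gamma_pos_of_pos (by linarith : (0:ℝ) < n/2 - 1 + 1)).ne'
  rw [show (n+k)/2 - 1 + 1 = (n+k)/2 by ring, show n/2 - 1 + 1 = n/2 by ring] at hratio
  refine hratio.congr' ?_
  filter_upwards [eventually_gt_atTop (0:ℝ)] with s hs
  symm
  rw [Sig_eq n k s, J_scaling _ s hs, J_scaling _ s hs]
  have e1 : (s/2)^(k/2) * 2^(k/2) = s^(k/2) := by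
    rw [← Real.mul_rpow (by positivity) (by norm_num)]
    congr 1; field_simp
  have e2 : s^(k/2) * s^(-(((n+k)/2 - 1)+1)) = s^(-((n/2 - 1)+1)) := by
    rw [← Real.rpow_add hs]; congr 1; ring
  have hB : s^(-((n/2 - 1)+1)) ≠ 0 := (Real.rpow_pos_of_pos hs _).ne'
  calc (s/2)^(k/2) * (2^(k/2) * ((s^(-(((n+k)/2 - 1)+1)) * Kf ((n+k)/2 - 1) s) /
          (s^(-((n/2 - 1)+1)) * Kf (n/2 - 1) s)))
      = ((s/2)^(k/2) * 2^(k/2) * s^(-(((n+k)/2 - 1)+1)) * Kf ((n+k)/2 - 1) s) /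
          (s^(-((n/2 - 1)+1)) * Kf (n/2 - 1) s) := by ring
    _ = (s^(-((n/2 - 1)+1)) * Kf ((n+k)/2 - 1) s) /
          (s^(-((n/2 - 1)+1)) * Kf (n/2 - 1) s) := by rw [e1, e2]
    _ = Kf ((n+k)/2 - 1) s / Kf (n/2 - 1) s := mul_div_mul_left _ _ hB

theorem part2 (n k : ℝ) (hn : 0 < n) (hk : 0 < k) :
    Tendsto (fun s : ℝ => |s| ^ (-(k / 2)) * Sig n k s) atBot (𝓝 1) := by
  have hc1 : -1 < (n+k)/2 - 1 := by linarith
  have hc0 : -1 < n/2 - 1 := by linarith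
  have hsqrt : (0:ℝ) < Real.sqrt π := Real.sqrt_pos.mpr Real.pi_pos
  have hratio := (tendsto_Ff _ hc1).div (tendsto_Ff _ hc0) hsqrt.ne'
  rw [div_self hsqrt.ne'] at hratio
  have hcomp : Tendsto (fun s : ℝ => Ff ((n+k)/2 - 1) (-s) / Ff (n/2 - 1) (-s)) atBot (𝓝 1) :=
    hratio.comp tendsto_neg_atBot_atTop
  refine hcomp.congr' ?_
  filter_upwards [eventually_lt_atBot (0:ℝ)] with s hs
  have hσ : (0:ℝ) < -s := by linarith
  symm
  rw [abs_of_neg hs, show Sig n k s = Sig n k (-(-s)) by rw [neg_neg],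
    Sig_eq, J_shift _ _ hσ, J_shift _ _ hσ]
  set σ := -s with hσdef
  have hσ2 : (0:ℝ) < σ/2 := by positivity
  have hE : Real.exp (σ^2/4) ≠ 0 := (Real.exp_pos _).ne'
  have hA0 : ((σ/2):ℝ)^(n/2 - 1) ≠ 0 := (Real.rpow_pos_of_pos hσ2 _).ne'
  have key : σ^(-(k/2)) * 2^(k/2) * (σ/2)^((n+k)/2 - 1) = (σ/2)^(n/2 - 1) := by
    have h1 : (σ/2:ℝ)^((n+k)/2 - 1) = (σ/2)^(n/2 - 1) * (σ/2)^(k/2) := by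
      rw [← Real.rpow_add hσ2]; congr 1; ring
    have h2 : (2:ℝ)^(k/2) * (σ/2)^(k/2) = σ^(k/2) := by
      rw [← Real.mul_rpow (by norm_num) hσ2.le]
      congr 1; field_simp
    have h3 : σ^(-(k/2)) * σ^(k/2) = 1 := by
      rw [← Real.rpow_add hσ]; norm_num
    rw [h1]
    calc σ^(-(k/2)) * 2^(k/2) * ((σ/2)^(n/2 - 1) * (σ/2)^(k/2))
        = (σ/2)^(n/2 - 1) * (σ^(-(k/2)) * (2^(k/2) * (σ/2)^(k/2))) := by ring
      _ = (σ/2)^(n/2 - 1) * (σ^(-(k/2)) * σ^(k/2)) := by rw [h2]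
      _ = (σ/2)^(n/2 - 1) := by rw [h3, mul_one]
  have hEq : (Real.exp (σ^2/4) * ((σ/2)^((n+k)/2 - 1) * Ff ((n+k)/2 - 1) σ)) /
      (Real.exp (σ^2/4) * ((σ/2)^(n/2 - 1) * Ff (n/2 - 1) σ))
      = ((σ/2)^((n+k)/2 - 1) * Ff ((n+k)/2 - 1) σ) /
        ((σ/2)^(n/2 - 1) * Ff (n/2 - 1) σ) := mul_div_mul_left _ _ hE
  rw [hEq]
  calc σ^(-(k/2)) * (2^(k/2) * (((σ/2)^((n+k)/2 - 1) * Ff ((n+k)/2 - 1) σ) /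
          ((σ/2)^(n/2 - 1) * Ff (n/2 - 1) σ)))
      = ((σ^(-(k/2)) * 2^(k/2) * (σ/2)^((n+k)/2 - 1)) * Ff ((n+k)/2 - 1) σ) /
          ((σ/2)^(n/2 - 1) * Ff (n/2 - 1) σ) := by ring
    _ = ((σ/2)^(n/2 - 1) * Ff ((n+k)/2 - 1) σ) /
          ((σ/2)^(n/2 - 1) * Ff (n/2 - 1) σ) := by rw [key]
    _ = Ff ((n+k)/2 - 1) σ / Ff (n/2 - 1) σ := mul_div_mul_left _ _ hA0

end SigmaAsymptoticsAux

/-- Asymptotics of the moments: as `s → +∞`, `(s/2)^{k/2} Σ_{n,k}(s) → Γ((n+k)/2)/Γ(n/2)`;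
as `s → -∞`, `|s|^{-k/2} Σ_{n,k}(s) → 1`. -/
theorem Sigma_asymptotics (n k : ℝ) (hn : 0 < n) (hk : 0 < k) :
    Filter.Tendsto (fun s : ℝ => (s / 2) ^ (k / 2) * Sig n k s) Filter.atTop
      (nhds (Real.Gamma ((n + k) / 2) / Real.Gamma (n / 2))) ∧
    Filter.Tendsto (fun s : ℝ => |s| ^ (-(k / 2)) * Sig n k s) Filter.atBot (nhds 1) :=
  ⟨part1 n k hn hk, part2 n k hn hk⟩
end
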